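/- If T ≥ 0 is a positive self-adjoint operator on H ⊗ H, then P₂ = 1 + T is strictly positive and P₃ = (1 + T₂)(1 + T₁ + T₁T₂) is strictly positive on H^{⊗3}. -/

import Mathlib

/-- `ampl1 d T` is the amplification `T ⊗ 1` of an operator `T` on
`ℂ^d ⊗ ℂ^d` (modelled as `EuclideanSpace ℂ (Fin d × Fin d)`) to the triple
tensor power, acting on the first two tensor factors. -/
noncomputable def ampl1 (d : ℕ)
    (T : EuclideanSpace ℂ (Fin d × Fin d) →L[ℂ] EuclideanSpace ℂ (Fin d × Fin d)) :
    EuclideanSpace ℂ (Fin d × Fin d × Fin d) →L[ℂ] EuclideanSpace ℂ (Fin d × Fin d × Fin d) :=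
  LinearMap.toContinuousLinearMap
    { toFun := fun x => WithLp.toLp 2 (fun p =>
        T (WithLp.toLp 2 (fun r => x (r.1, r.2, p.2.2) : Fin d × Fin d → ℂ)) (p.1, p.2.1)
        : Fin d × Fin d × Fin d → ℂ)
      map_add' := by
        intro x y; ext p
        have : (WithLp.toLp 2 (fun r => (x + y) (r.1, r.2, p.2.2) : Fin d × Fin d → ℂ) :
            EuclideanSpace ℂ (Fin d × Fin d)) =
            (WithLp.toLp 2 (fun r => x (r.1, r.2, p.2.2) : Fin d × Fin d → ℂ) :
            EuclideanSpace ℂ (Fin d × Fin d)) +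
            WithLp.toLp 2 (fun r => y (r.1, r.2, p.2.2) : Fin d × Fin d → ℂ) := rfl
        show T _ _ = _
        rw [this, map_add]; rfl
      map_smul' := by
        intro c x; ext p
        have : (WithLp.toLp 2 (fun r => (c • x) (r.1, r.2, p.2.2) : Fin d × Fin d → ℂ) :
            EuclideanSpace ℂ (Fin d × Fin d)) =
            c • (WithLp.toLp 2 (fun r => x (r.1, r.2, p.2.2) : Fin d × Fin d → ℂ) :
            EuclideanSpace ℂ (Fin d × Fin d)) := rfl
        show T _ _ = _
        rw [this, map_smul]; rfl }

/-- `ampl2 d T` is the amplification `1 ⊗ T`, acting on the last two tensor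
factors of the triple tensor power. -/
noncomputable def ampl2 (d : ℕ)
    (T : EuclideanSpace ℂ (Fin d × Fin d) →L[ℂ] EuclideanSpace ℂ (Fin d × Fin d)) :
    EuclideanSpace ℂ (Fin d × Fin d × Fin d) →L[ℂ] EuclideanSpace ℂ (Fin d × Fin d × Fin d) :=
  LinearMap.toContinuousLinearMap
    { toFun := fun x => WithLp.toLp 2 (fun p =>
        T (WithLp.toLp 2 (fun r => x (p.1, r.1, r.2) : Fin d × Fin d → ℂ)) (p.2.1, p.2.2)
        : Fin d × Fin d × Fin d → ℂ)
      map_add' := by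
        intro x y; ext p
        have : (WithLp.toLp 2 (fun r => (x + y) (p.1, r.1, r.2) : Fin d × Fin d → ℂ) :
            EuclideanSpace ℂ (Fin d × Fin d)) =
            (WithLp.toLp 2 (fun r => x (p.1, r.1, r.2) : Fin d × Fin d → ℂ) :
            EuclideanSpace ℂ (Fin d × Fin d)) +
            WithLp.toLp 2 (fun r => y (p.1, r.1, r.2) : Fin d × Fin d → ℂ) := rfl
        show T _ _ = _
        rw [this, map_add]; rfl
      map_smul' := by
        intro c x; ext p
        have : (WithLp.toLp 2 (fun r => (c • x) (p.1, r.1, r.2) : Fin d × Fin d → ℂ) :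
            EuclideanSpace ℂ (Fin d × Fin d)) =
            c • (WithLp.toLp 2 (fun r => x (p.1, r.1, r.2) : Fin d × Fin d → ℂ) :
            EuclideanSpace ℂ (Fin d × Fin d)) := rfl
        show T _ _ = _
        rw [this, map_smul]; rfl }

section Helpers
open ContinuousLinearMap RCLike
local notation "⟪" x ", " y "⟫" => @inner ℂ _ _ x y

noncomputable def slice1 (d : ℕ) (x : EuclideanSpace ℂ (Fin d × Fin d × Fin d)) (c : Fin d) :
    EuclideanSpace ℂ (Fin d × Fin d) := WithLp.toLp 2 (fun r : Fin d × Fin d => x (r.1, r.2, c))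

noncomputable def slice2 (d : ℕ) (x : EuclideanSpace ℂ (Fin d × Fin d × Fin d)) (a : Fin d) :
    EuclideanSpace ℂ (Fin d × Fin d) := WithLp.toLp 2 (fun r : Fin d × Fin d => x (a, r.1, r.2))

lemma ampl1_apply' (d : ℕ)
    (T : EuclideanSpace ℂ (Fin d × Fin d) →L[ℂ] EuclideanSpace ℂ (Fin d × Fin d))
    (x : EuclideanSpace ℂ (Fin d × Fin d × Fin d)) (p : Fin d × Fin d × Fin d) :
    ampl1 d T x p = T (slice1 d x p.2.2) (p.1, p.2.1) := rfl

lemma ampl2_apply' (d : ℕ)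
    (T : EuclideanSpace ℂ (Fin d × Fin d) →L[ℂ] EuclideanSpace ℂ (Fin d × Fin d))
    (x : EuclideanSpace ℂ (Fin d × Fin d × Fin d)) (p : Fin d × Fin d × Fin d) :
    ampl2 d T x p = T (slice2 d x p.1) (p.2.1, p.2.2) := rfl

lemma inner_ampl1 (d : ℕ)
    (T : EuclideanSpace ℂ (Fin d × Fin d) →L[ℂ] EuclideanSpace ℂ (Fin d × Fin d))
    (x y : EuclideanSpace ℂ (Fin d × Fin d × Fin d)) :
    ⟪x, ampl1 d T y⟫ = ∑ c : Fin d, ⟪slice1 d x c, T (slice1 d y c)⟫ := by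
  simp only [PiLp.inner_apply, RCLike.inner_apply, ampl1_apply']
  rw [← (Equiv.prodAssoc (Fin d) (Fin d) (Fin d)).sum_comp
    (fun p => T (slice1 d y p.2.2) (p.1, p.2.1) * (starRingEnd ℂ) (x p))]
  rw [Fintype.sum_prod_type, Finset.sum_comm]
  simp [slice1, Equiv.prodAssoc]

lemma inner_ampl2 (d : ℕ)
    (T : EuclideanSpace ℂ (Fin d × Fin d) →L[ℂ] EuclideanSpace ℂ (Fin d × Fin d))
    (x y : EuclideanSpace ℂ (Fin d × Fin d × Fin d)) :
    ⟪x, ampl2 d T y⟫ = ∑ a : Fin d, ⟪slice2 d x a, T (slice2 d y a)⟫ := by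
  simp only [PiLp.inner_apply, RCLike.inner_apply, ampl2_apply']
  rw [Fintype.sum_prod_type]
  simp [slice2, Fintype.sum_prod_type]

lemma ampl1_symm (d : ℕ)
    (T : EuclideanSpace ℂ (Fin d × Fin d) →L[ℂ] EuclideanSpace ℂ (Fin d × Fin d))
    (hT : IsSelfAdjoint T) (x y : EuclideanSpace ℂ (Fin d × Fin d × Fin d)) :
    ⟪ampl1 d T x, y⟫ = ⟪x, ampl1 d T y⟫ := by
  have hsym := (ContinuousLinearMap.isSelfAdjoint_iff_isSymmetric).mp hT
  calc ⟪ampl1 d T x, y⟫ = (starRingEnd ℂ) ⟪y, ampl1 d T x⟫ := (inner_conj_symm _ _).symm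
    _ = (starRingEnd ℂ) (∑ c : Fin d, ⟪slice1 d y c, T (slice1 d x c)⟫) := by
        rw [inner_ampl1]
    _ = ∑ c : Fin d, ⟪T (slice1 d x c), slice1 d y c⟫ := by
        rw [map_sum]; exact Finset.sum_congr rfl fun c _ => inner_conj_symm _ _
    _ = ∑ c : Fin d, ⟪slice1 d x c, T (slice1 d y c)⟫ :=
        Finset.sum_congr rfl fun c _ => hsym _ _
    _ = ⟪x, ampl1 d T y⟫ := (inner_ampl1 d T x y).symm

lemma ampl2_symm (d : ℕ)
    (T : EuclideanSpace ℂ (Fin d × Fin d) →L[ℂ] EuclideanSpace ℂ (Fin d × Fin d))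
    (hT : IsSelfAdjoint T) (x y : EuclideanSpace ℂ (Fin d × Fin d × Fin d)) :
    ⟪ampl2 d T x, y⟫ = ⟪x, ampl2 d T y⟫ := by
  have hsym := (ContinuousLinearMap.isSelfAdjoint_iff_isSymmetric).mp hT
  calc ⟪ampl2 d T x, y⟫ = (starRingEnd ℂ) ⟪y, ampl2 d T x⟫ := (inner_conj_symm _ _).symm
    _ = (starRingEnd ℂ) (∑ a : Fin d, ⟪slice2 d y a, T (slice2 d x a)⟫) := by
        rw [inner_ampl2]
    _ = ∑ a : Fin d, ⟪T (slice2 d x a), slice2 d y a⟫ := by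
        rw [map_sum]; exact Finset.sum_congr rfl fun a _ => inner_conj_symm _ _
    _ = ∑ a : Fin d, ⟪slice2 d x a, T (slice2 d y a)⟫ :=
        Finset.sum_congr rfl fun a _ => hsym _ _
    _ = ⟪x, ampl2 d T y⟫ := (inner_ampl2 d T x y).symm

lemma ampl1_isPositive (d : ℕ)
    (T : EuclideanSpace ℂ (Fin d × Fin d) →L[ℂ] EuclideanSpace ℂ (Fin d × Fin d))
    (hT : T.IsPositive) : (ampl1 d T).IsPositive := by
  refine ⟨fun x y =>
    ampl1_symm d T hT.isSelfAdjoint x y, fun x => ?_⟩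
  have : ⟪ampl1 d T x, x⟫ = ∑ c : Fin d, ⟪slice1 d x c, T (slice1 d x c)⟫ := by
    rw [ampl1_symm d T hT.isSelfAdjoint, inner_ampl1]
  rw [ContinuousLinearMap.reApplyInnerSelf, this, map_sum]
  exact Finset.sum_nonneg fun c _ => (RCLike.nonneg_iff.mp (hT.inner_nonneg_right _)).1

lemma ampl2_isPositive (d : ℕ)
    (T : EuclideanSpace ℂ (Fin d × Fin d) →L[ℂ] EuclideanSpace ℂ (Fin d × Fin d))
    (hT : T.IsPositive) : (ampl2 d T).IsPositive := by
  refine ⟨fun x y =>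
    ampl2_symm d T hT.isSelfAdjoint x y, fun x => ?_⟩
  have : ⟪ampl2 d T x, x⟫ = ∑ a : Fin d, ⟪slice2 d x a, T (slice2 d x a)⟫ := by
    rw [ampl2_symm d T hT.isSelfAdjoint, inner_ampl2]
  rw [ContinuousLinearMap.reApplyInnerSelf, this, map_sum]
  exact Finset.sum_nonneg fun a _ => (RCLike.nonneg_iff.mp (hT.inner_nonneg_right _)).1

/-- An operator bounded below by the identity (in quadratic form sense) on a
finite-dimensional Hilbert space is a unit. -/
lemma isUnit_of_coercive {E : Type*} [NormedAddCommGroup E] [InnerProductSpace ℂ E]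
    [FiniteDimensional ℂ E] (P : E →L[ℂ] E)
    (h : ∀ x : E, ‖x‖ ^ 2 ≤ RCLike.re ⟪P x, x⟫) : IsUnit P := by
  rw [ContinuousLinearMap.isUnit_iff_bijective]
  have hinj : Function.Injective P := by
    rw [injective_iff_map_eq_zero]
    intro x hx
    have h1 := h x
    rw [hx, inner_zero_left, map_zero] at h1
    have : ‖x‖ = 0 := by nlinarith [norm_nonneg x]
    exact norm_eq_zero.mp this
  exact ⟨hinj, (LinearMap.injective_iff_surjective (f := (P : E →ₗ[ℂ] E))).mp hinj⟩

end Helpers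

/-- If `T ≥ 0` is a positive (self-adjoint) operator on `H ⊗ H`
(here `H = ℂ^d`), then `P₂ = 1 + T` is strictly positive and
`P₃ = (1 + T₂)(1 + T₁ + T₁T₂)` is strictly positive on `H^{⊗3}`. -/

theorem P2_P3_strictly_positive_of_positive (d : ℕ) (hd : 1 ≤ d)
    (T : EuclideanSpace ℂ (Fin d × Fin d) →L[ℂ] EuclideanSpace ℂ (Fin d × Fin d))
    (hpos : T.IsPositive) :
    ((1 + T).IsPositive ∧ IsUnit (1 + T)) ∧
      ((1 + ampl2 d T) ∘L (1 + ampl1 d T + ampl1 d T ∘L ampl2 d T)).IsPositive ∧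
        IsUnit ((1 + ampl2 d T) ∘L (1 + ampl1 d T + ampl1 d T ∘L ampl2 d T)) := by
  have coercive_one_add : ∀ (E : Type) [NormedAddCommGroup E] [InnerProductSpace ℂ E]
      [CompleteSpace E] (A : E →L[ℂ] E), A.IsPositive → ∀ x : E,
      ‖x‖ ^ 2 ≤ RCLike.re (@inner ℂ _ _ ((1 + A) x) x) := by
    intro E _ _ _ A hA x
    rw [ContinuousLinearMap.add_apply, ContinuousLinearMap.one_apply, inner_add_left, map_add,
      inner_self_eq_norm_sq (𝕜 := ℂ)]
    have := (RCLike.nonneg_iff.mp (hA.inner_nonneg_left x)).1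
    linarith
  set A := ampl1 d T with hA
  set B := ampl2 d T with hB
  have hApos := ampl1_isPositive d T hpos
  have hBpos := ampl2_isPositive d T hpos
  have hSpos : (1 + B).IsPositive := ContinuousLinearMap.isPositive_one.add hBpos
  have hSadj : ContinuousLinearMap.adjoint (1 + B) = 1 + B := hSpos.isSelfAdjoint
  -- rewrite P₃ as S + S A S with S = 1 + B
  have hP3 : (1 + B) ∘L (1 + A + A ∘L B) = (1 + B) + ((1 + B) ∘L A) ∘L (1 + B) := by
    simp only [ContinuousLinearMap.comp_add, ContinuousLinearMap.add_comp,
      ContinuousLinearMap.comp_id, ContinuousLinearMap.id_comp, ContinuousLinearMap.one_def,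
      ContinuousLinearMap.comp_assoc]
    abel
  have hconj : (((1 + B) ∘L A) ∘L (1 + B)).IsPositive := by
    have := hApos.conj_adjoint (1 + B)
    rwa [hSadj, ← ContinuousLinearMap.comp_assoc] at this
  have hP3pos : ((1 + B) ∘L (1 + A + A ∘L B)).IsPositive := by
    rw [hP3]; exact hSpos.add hconj
  have hP3coercive : ∀ x, ‖x‖ ^ 2 ≤
      RCLike.re (@inner ℂ _ _ (((1 + B) ∘L (1 + A + A ∘L B)) x) x) := by
    intro x
    rw [hP3, ContinuousLinearMap.add_apply, inner_add_left, map_add]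
    have h1 := coercive_one_add _ B hBpos x
    have h2 := (RCLike.nonneg_iff.mp (hconj.inner_nonneg_left x)).1
    linarith
  exact ⟨⟨ContinuousLinearMap.isPositive_one.add hpos,
      isUnit_of_coercive _ (coercive_one_add _ T hpos)⟩,
    hP3pos, isUnit_of_coercive _ hP3coercive⟩
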